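/- For all real numbers d > 10000, 1.2 ≤ s₁ ≤ 1.51 and 1.2 ≤ k₁ ≤ 1.05·s₁, the quantity g(k₁, s₁, d) = (2·log log log d − log s₁)/(2·log log d) − k₁·(log log d)²/(1.128·s₁²·(log d)³) − k₁·(log log d)/(s₁·log d) is positive. -/

import Mathlib

open Real

private lemma taylor7 {x : ℝ} (hx : 0 ≤ x) :
    1 + x + x^2/2 + x^3/6 + x^4/24 + x^5/120 + x^6/720 ≤ Real.exp x := by
  have h := Real.sum_le_exp_of_nonneg hx 7
  norm_num [Finset.sum_range_succ, Nat.factorial] at h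
  linarith

private lemma log_10000 : (9.2:ℝ) ≤ Real.log 10000 := by
  have h2 := Real.log_two_gt_d9
  have h1 : Real.log ((10000:ℝ)^3 * 1.024^4) = Real.log ((2:ℝ)^40) := by norm_num
  rw [Real.log_mul (by norm_num) (by norm_num), Real.log_pow, Real.log_pow,
    Real.log_pow] at h1
  have h3 : Real.log 1.024 ≤ 0.024 := by
    have := Real.log_le_sub_one_of_pos (x := 1.024) (by norm_num); linarith
  push_cast at h1
  linarith

private lemma log_92 : (2.2191:ℝ) ≤ Real.log 9.2 := by
  have h2 := Real.log_two_gt_d9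
  have h5 : Real.log ((1.15:ℝ)^5 / 2) = 5 * Real.log 1.15 - Real.log 2 := by
    rw [Real.log_div (by positivity) (by norm_num), Real.log_pow]; push_cast; ring
  have h3 := Real.one_sub_inv_le_log_of_pos (x := (1.15:ℝ)^5 / 2) (by norm_num)
  have h4 : (0.0056465:ℝ) ≤ 1 - ((1.15:ℝ)^5 / 2)⁻¹ := by norm_num
  have hid : Real.log 9.2 = 3 * Real.log 2 + Real.log 1.15 := by
    rw [show (9.2:ℝ) = 2^3 * 1.15 by norm_num,
      Real.log_mul (by norm_num) (by norm_num), Real.log_pow]; push_cast; ring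
  linarith

private lemma log_2_2191 : (0.797:ℝ) ≤ Real.log 2.2191 := by
  have h2 := Real.log_two_gt_d9
  have h5 : Real.log ((1.10955:ℝ)^7 / 2) = 7 * Real.log 1.10955 - Real.log 2 := by
    rw [Real.log_div (by positivity) (by norm_num), Real.log_pow]; push_cast; ring
  have h3 := Real.one_sub_inv_le_log_of_pos (x := (1.10955:ℝ)^7 / 2) (by norm_num)
  have h4 : (0.033937:ℝ) ≤ 1 - ((1.10955:ℝ)^7 / 2)⁻¹ := by norm_num
  have hid : Real.log 2.2191 = Real.log 2 + Real.log 1.10955 := by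
    rw [show (2.2191:ℝ) = 2 * 1.10955 by norm_num,
      Real.log_mul (by norm_num) (by norm_num)]
  linarith

private lemma log_151 : Real.log 1.51 ≤ 0.4122 := by
  have h2 := Real.log_two_lt_d9
  have h5 : Real.log (8 / (1.51:ℝ)^5) = 3 * Real.log 2 - 5 * Real.log 1.51 := by
    rw [Real.log_div (by norm_num) (by positivity), Real.log_pow,
      show (8:ℝ) = 2^3 by norm_num, Real.log_pow]; push_cast; ring
  have h3 := Real.one_sub_inv_le_log_of_pos (x := 8 / (1.51:ℝ)^5) (by norm_num)
  have h4 : (0.0187159:ℝ) ≤ 1 - (8 / (1.51:ℝ)^5)⁻¹ := by norm_num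
  linarith

set_option maxHeartbeats 2000000 in
theorem g_positive (d k₁ s₁ : ℝ) (hd : 10000 < d)
    (hs₁ : 1.2 ≤ s₁) (hs₁' : s₁ ≤ 1.51) (hk₁ : 1.2 ≤ k₁) (hk₁' : k₁ ≤ 1.05 * s₁) :
    0 < (2 * Real.log (Real.log (Real.log d)) - Real.log s₁)
          / (2 * Real.log (Real.log d))
        - k₁ * (Real.log (Real.log d)) ^ 2 / (1.128 * s₁ ^ 2 * (Real.log d) ^ 3)
        - k₁ * Real.log (Real.log d) / (s₁ * Real.log d) := by
  set L := Real.log d with hLdef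
  set u := Real.log L with hudef
  set w := Real.log u with hwdef
  have hL : (9.2:ℝ) ≤ L := le_trans log_10000 (Real.log_le_log (by norm_num) hd.le)
  have hu : (2.2191:ℝ) ≤ u := le_trans log_92 (Real.log_le_log (by norm_num) hL)
  have hw : (0.797:ℝ) ≤ w := le_trans log_2_2191 (Real.log_le_log (by norm_num) hu)
  have hL0 : (0:ℝ) < L := by linarith
  have hu0 : (0:ℝ) < u := by linarith
  have hs0 : (0:ℝ) < s₁ := by linarith
  have hexp : Real.exp u = L := Real.exp_log hL0
  have hT : 1 + u + u^2/2 + u^3/6 + u^4/24 + u^5/120 + u^6/720 ≤ L := by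
    rw [← hexp]; exact taylor7 (by linarith)
  have hv : (0:ℝ) ≤ u - 2.2191 := by linarith
  have hG1 : 1.811 * u^2 ≤ L := by
    nlinarith [pow_nonneg hv 2, pow_nonneg hv 3, pow_nonneg hv 4, pow_nonneg hv 5,
      pow_nonneg hv 6]
  have hG2 : 1.05 * u^2 + 0.047 * u + 0.1 ≤ 0.5909 * L := by
    nlinarith [pow_nonneg hv 2, pow_nonneg hv 3, pow_nonneg hv 4, pow_nonneg hv 5,
      pow_nonneg hv 6]
  have hls : Real.log s₁ ≤ 0.4122 :=
    le_trans (Real.log_le_log hs0 hs₁') log_151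
  have hA : (1.1818:ℝ)/(2*u) ≤ (2*w - Real.log s₁)/(2*u) :=
    div_le_div_of_nonneg_right (by linarith) (by positivity) |>.trans_eq rfl
  have hB : k₁ * u ^ 2 / (1.128 * s₁ ^ 2 * L ^ 3) ≤ 0.047 / L := by
    rw [div_le_div_iff₀ (by positivity) hL0]
    have m1 : k₁ * (u^2 * L) ≤ (1.05 * s₁) * (u^2 * L) :=
      mul_le_mul_of_nonneg_right hk₁' (by positivity)
    have m2 : (1.811 * u^2) * (1.05 * s₁ * L) ≤ L * (1.05 * s₁ * L) :=
      mul_le_mul_of_nonneg_right hG1 (by positivity)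
    have hsl : (11.04:ℝ) ≤ s₁ * L := by
      nlinarith [mul_nonneg (by linarith : (0:ℝ) ≤ s₁ - 1.2) (by linarith : (0:ℝ) ≤ L - 9.2)]
    have m3 : 11.04 * (s₁ * L^2) ≤ (s₁ * L) * (s₁ * L^2) :=
      mul_le_mul_of_nonneg_right hsl (by positivity)
    have m4 : (0:ℝ) ≤ s₁^2 * L^3 := by positivity
    linarith
  have hC : k₁ * u / (s₁ * L) ≤ 1.05 * u / L := by
    rw [div_le_div_iff₀ (by positivity) hL0]
    have := mul_le_mul_of_nonneg_right hk₁' (mul_pos hu0 hL0).le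
    nlinarith [this]
  have hfin : (0.047:ℝ)/L + 1.05 * u / L < 1.1818/(2*u) := by
    rw [← add_div, div_lt_div_iff₀ hL0 (by positivity)]
    nlinarith [hG2]
  linarith [hA, hB, hC, hfin]
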